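/- Let g : ℝ → ℝ be continuous and piecewise continuously differentiable with e^{−Φ(q) y} g(y) → 0 as y → ∞ and Ψ(x; |g|) < ∞ and Ψ(x; |g′|) < ∞ for all x (g′ taken as the right-derivative at non-differentiability points). Then for all real s ≤ S, Φ(q) Ψ(s; g) W̄(S−s) − φ_s(S; g) = ∫_s^S Ψ(y; g′) Θ̄(S−y) dy, where W̄(x) = ∫₀^x W(y) dy and Θ̄(x) = W(x) − Φ(q) W̄(x). In particular, for any K, the function Λ(s,S) = Φ(q) Ψ(s; g) W̄(S−s) + K − φ_s(S; g) equals ∫_s^S Ψ(y; g′) Θ̄(S−y) dy + K. -/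

import Mathlib

open MeasureTheory Set Filter Topology

noncomputable section

/-- The Laplace exponent of a spectrally negative Lévy process with data `(γ, σ, ν)`. -/
def psi (γ σ : ℝ) (ν : Measure ℝ) (s : ℝ) : ℝ :=
  γ * s + σ ^ 2 * s ^ 2 / 2 +
    ∫ z in Set.Iio (0 : ℝ), (Real.exp (s * z) - 1 - s * z * (if -1 < z then (1:ℝ) else 0)) ∂ν

/-- `Φ(q) = sup {λ ≥ 0 : ψ(λ) = q}`. -/
def PhiQ (γ σ : ℝ) (ν : Measure ℝ) (q : ℝ) : ℝ :=
  sSup {l : ℝ | 0 ≤ l ∧ psi γ σ ν l = q}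

/-- `Z^{(q)}(x) = 1 + q ∫₀ˣ W(y) dy`. -/
def Zfun (q : ℝ) (W : ℝ → ℝ) (x : ℝ) : ℝ := 1 + q * ∫ y in (0:ℝ)..x, W y

/-- `Z̄^{(q)}(x) = ∫₀ˣ Z(z) dz`. -/
def Zbar (q : ℝ) (W : ℝ → ℝ) (x : ℝ) : ℝ := ∫ z in (0:ℝ)..x, Zfun q W z

/-- `R^{(q)}(x) = Z̄(x) + ψ'(0+)/q`. -/
def Rfun (q psi'0 : ℝ) (W : ℝ → ℝ) (x : ℝ) : ℝ := Zbar q W x + psi'0 / q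

/-- `Ψ(s; h) = ∫_s^∞ e^{-Φ(q)(y-s)} h(y) dy`. -/
def PsiInt (Φq s : ℝ) (h : ℝ → ℝ) : ℝ := ∫ y in Set.Ioi s, Real.exp (-Φq * (y - s)) * h y

/-- `φ_s(x; h) = ∫_s^x W(x-y) h(y) dy`. -/
def phiInt (W : ℝ → ℝ) (s x : ℝ) (h : ℝ → ℝ) : ℝ := ∫ y in s..x, W (x - y) * h y

/-- Integrand of the nonlocal part of the generator `L`. -/
def genInt (h : ℝ → ℝ) (x z : ℝ) : ℝ :=
  h (x + z) - h x - deriv h x * z * (if -1 < z then (1:ℝ) else 0)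

/-- The generator `L` of the Lévy process, applied to a sufficiently smooth function. -/
def Lgen (γ σ : ℝ) (ν : Measure ℝ) (h : ℝ → ℝ) (x : ℝ) : ℝ :=
  γ * deriv h x + σ ^ 2 / 2 * deriv (deriv h) x + ∫ z in Set.Iio (0 : ℝ), genInt h x z ∂ν

/-- `W̄(x) = ∫₀ˣ W(y) dy`. -/
def Wbar (W : ℝ → ℝ) (x : ℝ) : ℝ := ∫ y in (0:ℝ)..x, W y

/-- `Θ̄(x) = W(x) − Φ(q) W̄(x)`. -/
def Thetabar (Φq : ℝ) (W : ℝ → ℝ) (x : ℝ) : ℝ := W x - Φq * Wbar W x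


-- integrability of exp * h on Ioi x from integrability of exp * |h|
lemma aux_int (Φ : ℝ) (h : ℝ → ℝ) (hm : Measurable h) (x : ℝ)
    (hi : IntegrableOn (fun y => Real.exp (-Φ * (y - x)) * |h y|) (Set.Ioi x)) :
    IntegrableOn (fun y => Real.exp (-Φ * (y - x)) * h y) (Set.Ioi x) := by
  refine hi.mono' ?_ ?_
  · exact ((Real.continuous_exp.comp (by continuity)).measurable.mul hm).aestronglyMeasurable.restrict
  · filter_upwards with t
    rw [Real.norm_eq_abs, abs_mul, abs_of_pos (Real.exp_pos _)]

lemma psiInt_deriv_eq (Φ : ℝ) (g g' : ℝ → ℝ) (hg : Continuous g)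
    (hg'meas : Measurable g')
    (hg'd : ∀ x, HasDerivWithinAt g (g' x) (Set.Ici x) x)
    (hgtail : Tendsto (fun y => Real.exp (-Φ * y) * g y) atTop (𝓝 0))
    (hgint : ∀ x : ℝ, IntegrableOn (fun y => Real.exp (-Φ * (y - x)) * |g y|) (Set.Ioi x))
    (hg'int : ∀ x : ℝ, IntegrableOn (fun y => Real.exp (-Φ * (y - x)) * |g' y|) (Set.Ioi x))
    (y : ℝ) : PsiInt Φ y g' = Φ * PsiInt Φ y g - g y := by
  have hgI : IntegrableOn (fun t => Real.exp (-Φ * (t - y)) * g t) (Set.Ioi y) :=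
    aux_int Φ g hg.measurable y (hgint y)
  have hg'I : IntegrableOn (fun t => Real.exp (-Φ * (t - y)) * g' t) (Set.Ioi y) :=
    aux_int Φ g' hg'meas y (hg'int y)
  set H : ℝ → ℝ := fun t => Real.exp (-Φ * (t - y)) * g t with hH
  set D : ℝ → ℝ := fun t => Real.exp (-Φ * (t - y)) * g' t - Φ * (Real.exp (-Φ * (t - y)) * g t)
    with hD
  have hDI : IntegrableOn D (Set.Ioi y) := hg'I.sub (hgI.const_mul Φ)
  have hHd : ∀ t : ℝ, HasDerivWithinAt H (D t) (Set.Ici t) t := by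
    intro t
    have h1 : HasDerivAt (fun t => Real.exp (-Φ * (t - y))) (-Φ * Real.exp (-Φ * (t - y))) t := by
      have h0 : HasDerivAt (fun t : ℝ => -Φ * (t - y)) (-Φ) t := by
        simpa using ((hasDerivAt_id t).sub_const y).const_mul (-Φ)
      simpa [mul_comm] using h0.exp
    have := (h1.hasDerivWithinAt).mul (hg'd t)
    exact this.congr_deriv (by simp only [hD]; ring)
  have hFTC : ∀ T, y ≤ T → (∫ t in y..T, D t) = H T - H y := by
    intro T hT
    refine intervalIntegral.integral_eq_sub_of_hasDeriv_right_of_le hT ?_ ?_ ?_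
    · exact (((Real.continuous_exp.comp (by continuity)).mul hg)).continuousOn
    · exact fun t _ => (hHd t).mono Set.Ioi_subset_Ici_self
    · rw [intervalIntegrable_iff_integrableOn_Ioc_of_le hT]
      exact hDI.mono_set Set.Ioc_subset_Ioi_self
  have hlim1 : Tendsto (fun T => ∫ t in y..T, D t) atTop (𝓝 (∫ t in Set.Ioi y, D t)) :=
    intervalIntegral_tendsto_integral_Ioi y hDI tendsto_id
  have hHtail : Tendsto H atTop (𝓝 0) := by
    have h2 : Tendsto (fun T => Real.exp (Φ * y) * (Real.exp (-Φ * T) * g T)) atTop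
        (𝓝 (Real.exp (Φ * y) * 0)) := hgtail.const_mul _
    rw [mul_zero] at h2
    refine h2.congr fun T => ?_
    rw [← mul_assoc, ← Real.exp_add, show Φ * y + -Φ * T = -Φ * (T - y) by ring]
  have hlim2 : Tendsto (fun T => ∫ t in y..T, D t) atTop (𝓝 (0 - H y)) := by
    have := hHtail.sub_const (H y)
    refine this.congr' ?_
    filter_upwards [eventually_ge_atTop y] with T hT
    exact (hFTC T hT).symm
  have hint_eq : (∫ t in Set.Ioi y, D t) = 0 - H y := tendsto_nhds_unique hlim1 hlim2
  have hsplit : (∫ t in Set.Ioi y, D t) = PsiInt Φ y g' - Φ * PsiInt Φ y g := by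
    unfold PsiInt
    rw [show D = fun t => (fun t => Real.exp (-Φ * (t - y)) * g' t) t
        - (fun t => Φ * (Real.exp (-Φ * (t - y)) * g t)) t from rfl,
      integral_sub hg'I (hgI.const_mul Φ), integral_const_mul]
  rw [hsplit] at hint_eq
  have hHy : H y = g y := by simp [hH]
  rw [hHy] at hint_eq
  linarith

lemma psiInt_hasDerivAt (Φ : ℝ) (g : ℝ → ℝ) (hg : Continuous g)
    (hgint : ∀ x : ℝ, IntegrableOn (fun y => Real.exp (-Φ * (y - x)) * |g y|) (Set.Ioi x))
    (y : ℝ) :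
    HasDerivAt (fun x => PsiInt Φ x g) (Φ * PsiInt Φ y g - g y) y := by
  set f : ℝ → ℝ := fun t => Real.exp (-Φ * t) * g t with hf
  have hfc : Continuous f := (Real.continuous_exp.comp (by continuity)).mul hg
  have hfint : ∀ a : ℝ, IntegrableOn f (Set.Ioi a) := by
    intro a
    have h1 : IntegrableOn (fun t => Real.exp (-Φ * (t - a)) * g t) (Set.Ioi a) :=
      aux_int Φ g hg.measurable a (hgint a)
    have h2 : f = fun t => Real.exp (-Φ * a) * (Real.exp (-Φ * (t - a)) * g t) := by
      funext t
      rw [← mul_assoc, ← Real.exp_add, show -Φ * a + -Φ * (t - a) = -Φ * t by ring]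
    rw [h2]
    exact h1.const_mul _
  set G : ℝ → ℝ := fun u => ∫ t in Set.Ioi u, f t with hGdef
  have hPsieq : ∀ u : ℝ, PsiInt Φ u g = Real.exp (Φ * u) * G u := by
    intro u
    unfold PsiInt
    rw [hGdef, ← integral_const_mul]
    refine setIntegral_congr_fun measurableSet_Ioi fun t _ => ?_
    rw [← mul_assoc, ← Real.exp_add, show Φ * u + -Φ * t = -Φ * (t - u) by ring]
  have hG : ∀ u : ℝ, HasDerivAt G (-(f u)) u := by
    intro u
    set a := u - 1 with ha
    have hau : a < u := by simp [ha]
    have hsplit : ∀ v, a < v → G v = (∫ t in Set.Ioi a, f t) - ∫ t in a..v, f t := by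
      intro v hv
      have h2 : (∫ t in Set.Ioc a v, f t) + ∫ t in Set.Ioi v, f t = ∫ t in Set.Ioi a, f t := by
        rw [← setIntegral_union (Set.Ioc_disjoint_Ioi le_rfl) measurableSet_Ioi
          ((hfint a).mono_set Set.Ioc_subset_Ioi_self) (hfint v),
          Set.Ioc_union_Ioi_eq_Ioi hv.le]
      rw [intervalIntegral.integral_of_le hv.le]
      simp only [hGdef]
      linarith
    have hd : HasDerivAt (fun v => (∫ t in Set.Ioi a, f t) - ∫ t in a..v, f t) (-(f u)) u := by
      have h3 := intervalIntegral.integral_hasDerivAt_right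
        (hfc.intervalIntegrable a u) (hfc.stronglyMeasurableAtFilter _ _) hfc.continuousAt
      simpa using h3.const_sub _
    refine hd.congr_of_eventuallyEq ?_
    filter_upwards [eventually_gt_nhds hau] with v hv
    exact hsplit v hv
  have he : HasDerivAt (fun u => Real.exp (Φ * u)) (Φ * Real.exp (Φ * y)) y := by
    have h0 : HasDerivAt (fun u : ℝ => Φ * u) Φ y := by simpa using (hasDerivAt_id y).const_mul Φ
    simpa [mul_comm] using h0.exp
  have hmul := he.mul (hG y)
  have heq : (fun u => Real.exp (Φ * u) * G u) = fun u => PsiInt Φ u g :=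
    funext fun u => (hPsieq u).symm
  rw [show ((fun u => Real.exp (Φ * u)) * G) = fun u => PsiInt Φ u g from heq] at hmul
  refine hmul.congr_deriv ?_
  rw [hPsieq y]
  have h1 : Real.exp (Φ * y) * Real.exp (-Φ * y) = 1 := by
    rw [← Real.exp_add]; norm_num
  simp only [hf]
  linear_combination -(g y) * h1

theorem stmt8
    (γ σ q : ℝ) (ν : Measure ℝ) (W : ℝ → ℝ)
    (hσ : 0 ≤ σ)
    (hνconc : ν (Set.Ici 0) = 0)
    (hνint : Integrable (fun z => min 1 (z ^ 2)) ν)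
    (hψtop : Tendsto (psi γ σ ν) atTop atTop)
    (hq : 0 < q)
    (hΦpos : 0 < PhiQ γ σ ν q)
    (hWnonneg : ∀ x, 0 ≤ W x)
    (hWzero : ∀ x < 0, W x = 0)
    (hWcont : ContinuousOn W (Set.Ici 0))
    (hWmono : StrictMonoOn W (Set.Ici 0))
    (hWlaplace : ∀ s, PhiQ γ σ ν q < s →
      ∫ x in Set.Ioi (0:ℝ), Real.exp (-s * x) * W x = 1 / (psi γ σ ν s - q))
    (g g' : ℝ → ℝ) (hg : Continuous g)
    (hg' : ∀ x, HasDerivWithinAt g (g' x) (Set.Ici x) x)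
    (hgtail : Tendsto (fun y => Real.exp (-(PhiQ γ σ ν q) * y) * g y) atTop (𝓝 0))
    (hgint : ∀ x : ℝ, IntegrableOn
      (fun y => Real.exp (-(PhiQ γ σ ν q) * (y - x)) * |g y|) (Set.Ioi x))
    (hg'int : ∀ x : ℝ, IntegrableOn
      (fun y => Real.exp (-(PhiQ γ σ ν q) * (y - x)) * |g' y|) (Set.Ioi x)) :
    ∀ s S : ℝ, s ≤ S →
      (PhiQ γ σ ν q * PsiInt (PhiQ γ σ ν q) s g * Wbar W (S - s) - phiInt W s S g
        = ∫ y in s..S, PsiInt (PhiQ γ σ ν q) y g' * Thetabar (PhiQ γ σ ν q) W (S - y)) ∧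
      ∀ K : ℝ,
        PhiQ γ σ ν q * PsiInt (PhiQ γ σ ν q) s g * Wbar W (S - s) + K - phiInt W s S g
          = (∫ y in s..S, PsiInt (PhiQ γ σ ν q) y g' * Thetabar (PhiQ γ σ ν q) W (S - y))
              + K := by

  intro s S hsS
  have hg'meas : Measurable g' := by
    have he : g' = fun x => derivWithin g (Set.Ici x) x := by
      funext x
      exact ((hg' x).derivWithin (uniqueDiffOn_Ici x x Set.self_mem_Ici)).symm
    rw [he]; exact measurable_derivWithin_Ici g
  set Φ := PhiQ γ σ ν q with hΦdef
  have hA : ∀ y, PsiInt Φ y g' = Φ * PsiInt Φ y g - g y :=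
    psiInt_deriv_eq Φ g g' hg hg'meas hg' hgtail hgint hg'int
  set P : ℝ → ℝ := fun x => PsiInt Φ x g with hPdef
  have hP : ∀ y, HasDerivAt P (Φ * P y - g y) y := psiInt_hasDerivAt Φ g hg hgint
  have hPcont : Continuous P := continuous_iff_continuousAt.2 fun y => (hP y).continuousAt
  have hSs : (0:ℝ) ≤ S - s := sub_nonneg.2 hsS
  have hWbar0 : Wbar W 0 = 0 := by simp [Wbar]
  have hWbarCont : ContinuousOn (Wbar W) (Set.Icc 0 (S - s)) := by
    have h0 : IntegrableOn W (Set.uIcc 0 (S - s)) := by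
      rw [Set.uIcc_of_le hSs]
      exact (hWcont.mono Set.Icc_subset_Ici_self).integrableOn_compact isCompact_Icc
    have := intervalIntegral.continuousOn_primitive_interval (a := (0:ℝ)) (b := S - s) h0
    exact (by simpa [Set.uIcc_of_le hSs] using this : ContinuousOn (fun x => ∫ t in (0:ℝ)..x, W t) (Set.Icc 0 (S - s)))
  have hWbarDeriv : ∀ x0 : ℝ, 0 < x0 → HasDerivAt (Wbar W) (W x0) x0 := by
    intro x0 hx0
    have hWIoi : ContinuousOn W (Set.Ioi 0) := hWcont.mono Set.Ioi_subset_Ici_self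
    have h1 : IntervalIntegrable W volume 0 x0 := by
      apply ContinuousOn.intervalIntegrable
      rw [Set.uIcc_of_le hx0.le]
      exact hWcont.mono Set.Icc_subset_Ici_self
    exact intervalIntegral.integral_hasDerivAt_right h1
      (ContinuousOn.stronglyMeasurableAtFilter isOpen_Ioi hWIoi x0 hx0)
      (hWIoi.continuousAt (Ioi_mem_nhds hx0))
  have hsubcont : ContinuousOn (fun y : ℝ => S - y) (Set.Icc s S) :=
    (continuous_const.sub continuous_id).continuousOn
  have hmaps : Set.MapsTo (fun y : ℝ => S - y) (Set.Icc s S) (Set.Icc 0 (S - s)) := by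
    intro y hy
    simp only [Set.mem_Icc] at hy ⊢
    constructor <;> linarith
  have hWcomp : ContinuousOn (fun y => W (S - y)) (Set.Icc s S) :=
    hWcont.comp hsubcont (fun y hy => by simp only [Set.mem_Ici]; linarith [hy.2])
  have hWbarcomp : ContinuousOn (fun y => Wbar W (S - y)) (Set.Icc s S) :=
    hWbarCont.comp hsubcont hmaps
  set F : ℝ → ℝ := fun y => P y * Wbar W (S - y) with hFdef
  set F' : ℝ → ℝ := fun y => (Φ * P y - g y) * Wbar W (S - y) - P y * W (S - y) with hF'def
  have hFd : ∀ y ∈ Set.Ioo s S, HasDerivAt F (F' y) y := by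
    intro y hy
    have h2 : HasDerivAt (fun y : ℝ => S - y) (-1) y := by
      simpa using (hasDerivAt_id y).const_sub S
    have h3 := (hWbarDeriv (S - y) (by linarith [hy.2])).comp y h2
    have h1 : HasDerivAt (fun y : ℝ => Wbar W (S - y)) (-W (S - y)) y := by
      exact h3.congr_deriv (by ring)
    have h4 := (hP y).mul h1
    exact h4.congr_deriv (by simp only [hF'def]; ring)
  have hF'cont : ContinuousOn F' (Set.Icc s S) := by
    refine ContinuousOn.sub ?_ (hPcont.continuousOn.mul hWcomp)
    exact ((continuous_const.mul hPcont).sub hg).continuousOn.mul hWbarcomp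
  have hF'int : IntervalIntegrable F' volume s S := by
    apply ContinuousOn.intervalIntegrable
    rwa [Set.uIcc_of_le hsS]
  have hFTC : (∫ y in s..S, F' y) = F S - F s := by
    refine intervalIntegral.integral_eq_sub_of_hasDeriv_right_of_le hsS ?_ ?_ hF'int
    · exact hPcont.continuousOn.mul hWbarcomp
    · exact fun y hy => (hFd y hy).hasDerivWithinAt
  have hFS : F S = 0 := by simp [hFdef, sub_self, hWbar0]
  have hgW : IntervalIntegrable (fun y => W (S - y) * g y) volume s S := by
    apply ContinuousOn.intervalIntegrable
    rw [Set.uIcc_of_le hsS]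
    exact hWcomp.mul hg.continuousOn
  have key : (∫ y in s..S, PsiInt Φ y g' * Thetabar Φ W (S - y))
      = -(∫ y in s..S, W (S - y) * g y) - Φ * ∫ y in s..S, F' y := by
    have hcongr : (∫ y in s..S, PsiInt Φ y g' * Thetabar Φ W (S - y))
        = ∫ y in s..S, (-(W (S - y) * g y) - Φ * F' y) := by
      apply intervalIntegral.integral_congr
      intro y hy
      show PsiInt Φ y g' * Thetabar Φ W (S - y) = -(W (S - y) * g y) - Φ * F' y
      rw [hA y]
      simp only [Thetabar, hF'def, hPdef]
      ring
    have hgWneg : IntervalIntegrable (fun y => -(W (S - y) * g y)) volume s S := by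
      exact hgW.neg
    rw [hcongr, intervalIntegral.integral_sub hgWneg (hF'int.const_mul Φ),
      intervalIntegral.integral_neg, intervalIntegral.integral_const_mul]
  have h1 : Φ * PsiInt Φ s g * Wbar W (S - s) - phiInt W s S g
      = ∫ y in s..S, PsiInt Φ y g' * Thetabar Φ W (S - y) := by
    rw [key, hFTC, hFS]
    simp only [phiInt, hFdef, hPdef]
    ring
  exact ⟨h1, fun K => by linarith⟩
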